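/- For any Schauder basis (e_n) of a Banach space X and any permutation π of ℕ, the permuted sequence (e_{π(n)}) can be blocked to form a skipped-blocking decomposition: there exist 0 = m(0) < m(1) < ... such that the blocks ([e_{π(j)} : m(i−1) < j ≤ m(i)])_i form an SBD of X. -/

import Mathlib

open Submodule Set Filter Topology

variable {E : Type*} [NormedAddCommGroup E] [NormedSpace ℝ E]

/-- A sequence of subspaces is a DDD: finite-dimensional, total and minimal. -/
def IsDDD (X : ℕ → Submodule ℝ E) : Prop :=
  (∀ n, FiniteDimensional ℝ (X n)) ∧
  (⨆ n, X n).topologicalClosure = ⊤ ∧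
  ∀ n, X n ⊓ (⨆ m ∈ {m | m ≠ n}, X m).topologicalClosure = ⊥

/-- `(W i)` is a finite-dimensional decomposition of its closed linear span:
every element of the closed span is the limit of partial sums of a unique
sequence of vectors `w i ∈ W i`. -/
def IsFDDof (W : ℕ → Submodule ℝ E) : Prop :=
  ∀ x ∈ (⨆ i, W i).topologicalClosure, ∃! w : ℕ → E,
    (∀ i, w i ∈ W i) ∧
      Filter.Tendsto (fun N => ∑ i ∈ Finset.range N, w i) Filter.atTop (nhds x)

/-- Skipped blocking decomposition: a DDD such that every skipped sequence of
blocks is an FDD of its closed linear span. -/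
def IsSBD (X : ℕ → Submodule ℝ E) : Prop :=
  IsDDD X ∧ ∀ n m : ℕ → ℕ, (∀ i, n i ≤ m i) → (∀ i, m i + 1 < n (i + 1)) →
    IsFDDof (fun i => ⨆ j ∈ Set.Icc (n i) (m i), X j)

/-- Minimal f.d. sequence which is a skipped blocking decomposition of its closed span. -/
def IsSBDofSpan (W : ℕ → Submodule ℝ E) : Prop :=
  (∀ n, FiniteDimensional ℝ (W n)) ∧
  (∀ n, W n ⊓ (⨆ m ∈ {m | m ≠ n}, W m).topologicalClosure = ⊥) ∧
  ∀ n m : ℕ → ℕ, (∀ i, n i ≤ m i) → (∀ i, m i + 1 < n (i + 1)) →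
    IsFDDof (fun i => ⨆ j ∈ Set.Icc (n i) (m i), W j)

/-- Norm of the skipped projection `R_{m,k}` onto `X[0,m)` with kernel the closed
span of the tail `X[k+1,∞)` (the spaces `X_m, …, X_k` are skipped). -/
noncomputable def skippedNorm (X : ℕ → Submodule ℝ E) (m k : ℕ) : ℝ :=
  sInf {C : ℝ | 0 ≤ C ∧ ∀ a ∈ (⨆ i ∈ Set.Iio m, X i),
    ∀ b ∈ (⨆ i ∈ Set.Ici (k + 1), X i).topologicalClosure, ‖a‖ ≤ C * ‖a + b‖}

/-- Annihilator of a subspace in the continuous dual. -/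
noncomputable def ann {F : Type*} [NormedAddCommGroup F] [NormedSpace ℝ F] (S : Submodule ℝ F) :
    Submodule ℝ (F →L[ℝ] ℝ) where
  carrier := {f | ∀ x ∈ S, f x = 0}
  add_mem' := by intro f g hf hg x hx; simp [hf x hx, hg x hx]
  zero_mem' := by intro x hx; simp
  smul_mem' := by intro c f hf x hx; simp [hf x hx]

/-- The predecomposition space `Y = [X_n^*]` of a DDD, where
`X_n^* = [X_m]^⊥_{m ≠ n}`. -/
noncomputable def predecomp (X : ℕ → Submodule ℝ E) : Submodule ℝ (E →L[ℝ] ℝ) :=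
  (⨆ n, ann ((⨆ m ∈ {m | m ≠ n}, X m).topologicalClosure)).topologicalClosure

/-- A sequence of subspaces is boundedly complete: boundedness of the partial sums
of a sequence of vectors from the subspaces implies norm convergence. -/
def IsBddCompl (W : ℕ → Submodule ℝ E) : Prop :=
  ∀ v : ℕ → E, (∀ i, v i ∈ W i) →
    BddAbove (Set.range fun N => ‖∑ i ∈ Finset.range N, v i‖) →
    ∃ s : E, Filter.Tendsto (fun N => ∑ i ∈ Finset.range N, v i) Filter.atTop (nhds s)

/-- A Schauder basis of `E`. -/
def IsSchauderBasis (e : ℕ → E) : Prop :=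
  ∀ x : E, ∃! a : ℕ → ℝ,
    Filter.Tendsto (fun N => ∑ i ∈ Finset.range N, a i • e i) Filter.atTop (nhds x)

section SchauderAux

open BoundedContinuousFunction

variable {E : Type*} [NormedAddCommGroup E] [NormedSpace ℝ E]

/-- The space of partial-sum sequences along the candidate basis `e`. -/
noncomputable def psums (e : ℕ → E) : Submodule ℝ (ℕ →ᵇ E) where
  carrier := {u | u 0 = 0 ∧ (∀ N, u (N + 1) - u N ∈ Submodule.span ℝ {e N}) ∧
    ∃ x : E, Tendsto (fun N => u N) atTop (𝓝 x)}
  add_mem' := by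
    rintro u v ⟨hu0, hu1, x, hx⟩ ⟨hv0, hv1, y, hy⟩
    refine ⟨by simp [hu0, hv0], fun N => ?_, x + y, ?_⟩
    · have : (u + v) (N + 1) - (u + v) N = (u (N+1) - u N) + (v (N+1) - v N) := by
        simp; abel
      rw [this]; exact add_mem (hu1 N) (hv1 N)
    · simpa using hx.add hy
  zero_mem' := ⟨rfl, fun N => by simp, 0, by simpa using tendsto_const_nhds⟩
  smul_mem' := by
    rintro c u ⟨hu0, hu1, x, hx⟩
    refine ⟨by simp [hu0], fun N => ?_, c • x, ?_⟩
    · have : (c • u) (N + 1) - (c • u) N = c • (u (N+1) - u N) := by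
        simp [smul_sub]
      rw [this]; exact Submodule.smul_mem _ _ (hu1 N)
    · simpa using hx.const_smul c

theorem isClosed_psums [CompleteSpace E] (e : ℕ → E) :
    IsClosed ((psums e : Submodule ℝ (ℕ →ᵇ E)) : Set (ℕ →ᵇ E)) := by
  rw [← isSeqClosed_iff_isClosed]
  intro g u hg hgu
  have hcoord : ∀ N : ℕ, Tendsto (fun n => g n N) atTop (𝓝 (u N)) := by
    intro N
    have : Continuous fun v : ℕ →ᵇ E => v N := (evalCLM (𝕜 := ℝ) N).continuous
    exact (this.tendsto u).comp hgu
  refine ⟨?_, fun N => ?_, ?_⟩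
  · exact tendsto_nhds_unique (hcoord 0) (by simpa [funext fun n => (hg n).1] using
      (tendsto_const_nhds : Tendsto (fun _ : ℕ => (0 : E)) atTop (𝓝 0)))
  · have hcl : IsClosed ((Submodule.span ℝ {e N} : Submodule ℝ E) : Set E) :=
      (Submodule.span ℝ {e N}).closed_of_finiteDimensional
    exact hcl.mem_of_tendsto ((hcoord (N+1)).sub (hcoord N))
      (Eventually.of_forall fun n => (hg n).2.1 N)
  · -- uniform limit of convergent sequences is convergent
    suffices h : CauchySeq (fun N => u N) by
      obtain ⟨x, hx⟩ := cauchySeq_tendsto_of_complete h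
      exact ⟨x, hx⟩
    rw [Metric.cauchySeq_iff]
    intro ε hε
    obtain ⟨n, hn⟩ := (Metric.tendsto_atTop.mp hgu) (ε/3) (by linarith)
    have hgn : CauchySeq (fun N => g n N) := by
      obtain ⟨x, hx⟩ := (hg n).2.2
      exact hx.cauchySeq
    obtain ⟨M, hM⟩ := Metric.cauchySeq_iff.mp hgn (ε/3) (by linarith)
    refine ⟨M, fun p hp q hq => ?_⟩
    have h1 : dist (u p) (g n p) ≤ ε/3 := by
      have := dist_coe_le_dist (f := u) (g := g n) p
      have hd := hn n le_rfl
      rw [dist_comm] at hd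
      linarith [this]
    have h2 : dist (g n q) (u q) ≤ ε/3 := by
      have := dist_coe_le_dist (f := g n) (g := u) q
      have hd := hn n le_rfl
      linarith [this]
    calc dist (u p) (u q) ≤ dist (u p) (g n p) + dist (g n p) (g n q) + dist (g n q) (u q) :=
          dist_triangle4 _ _ _ _
      _ < ε/3 + ε/3 + ε/3 := by
          have := hM p hp q hq
          linarith
      _ = ε := by ring

variable [CompleteSpace E]

noncomputable def psLim (e : ℕ → E) (u : psums e) : E := u.2.2.2.choose

theorem psLim_spec (e : ℕ → E) (u : psums e) :
    Tendsto (fun N => (u : ℕ →ᵇ E) N) atTop (𝓝 (psLim e u)) := u.2.2.2.choose_spec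

noncomputable def psumsLim (e : ℕ → E) : (psums e) →L[ℝ] E :=
  LinearMap.mkContinuous
    { toFun := psLim e
      map_add' := fun u v => by
        refine tendsto_nhds_unique (psLim_spec e (u + v)) ?_
        have := (psLim_spec e u).add (psLim_spec e v)
        simpa using this
      map_smul' := fun c u => by
        refine tendsto_nhds_unique (psLim_spec e (c • u)) ?_
        have := (psLim_spec e u).const_smul c
        simpa using this } 1
    (fun u => by
      rw [one_mul]
      refine le_of_tendsto ((psLim_spec e u).norm) ?_
      filter_upwards with N
      exact norm_coe_le_norm (u : ℕ →ᵇ E) N)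

theorem psumsLim_apply (e : ℕ → E) (u : psums e) : psumsLim e u = psLim e u := rfl

theorem IsSchauderBasis.ne_zero {e : ℕ → E} (hb : IsSchauderBasis e) (k : ℕ) : e k ≠ 0 := by
  intro h
  obtain ⟨a, -, ha⟩ := hb 0
  have h1 : (fun j => if j = k then (1:ℝ) else 0) = a := by
    refine ha _ ?_
    have hz : ∀ N, (∑ i ∈ Finset.range N, (if i = k then (1:ℝ) else 0) • e i) = 0 := fun N =>
      Finset.sum_eq_zero fun i _ => by by_cases hik : i = k <;> simp [hik, h]
    simp only [hz]
    exact tendsto_const_nhds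
  have h2 : (fun _ : ℕ => (0:ℝ)) = a := by
    refine ha _ ?_
    simp only [zero_smul, Finset.sum_const_zero]
    exact tendsto_const_nhds
  have := congrFun (h1.trans h2.symm) k
  simp at this

/-- partial sums of an expansion, as a bounded function. -/
noncomputable def psOf (e : ℕ → E) (a : ℕ → ℝ) {x : E}
    (ha : Tendsto (fun N => ∑ i ∈ Finset.range N, a i • e i) atTop (𝓝 x)) : ℕ →ᵇ E :=
  ofNormedAddCommGroupDiscrete (fun N => ∑ i ∈ Finset.range N, a i • e i)
    ((Metric.isBounded_range_of_tendsto _ ha).exists_norm_le.choose)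
    (fun N => (Metric.isBounded_range_of_tendsto _ ha).exists_norm_le.choose_spec _ ⟨N, rfl⟩)

theorem psOf_coe (e : ℕ → E) (a : ℕ → ℝ) {x : E}
    (ha : Tendsto (fun N => ∑ i ∈ Finset.range N, a i • e i) atTop (𝓝 x)) :
    ∀ N, psOf e a ha N = ∑ i ∈ Finset.range N, a i • e i := fun _ => rfl

theorem psOf_mem (e : ℕ → E) (a : ℕ → ℝ) {x : E}
    (ha : Tendsto (fun N => ∑ i ∈ Finset.range N, a i • e i) atTop (𝓝 x)) :
    psOf e a ha ∈ psums e := by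
  refine ⟨by simp [psOf_coe], fun N => ?_, x, by simpa [psOf_coe] using ha⟩
  rw [psOf_coe, psOf_coe, Finset.sum_range_succ]
  simp only [add_sub_cancel_left]
  exact Submodule.smul_mem _ _ (Submodule.mem_span_singleton_self _)

theorem psums_eq_zero {e : ℕ → E} (hb : IsSchauderBasis e) (u : psums e)
    (h : psumsLim e u = 0) : u = 0 := by
  obtain ⟨h0, hd, -⟩ := u.2
  choose a hA using fun N => Submodule.mem_span_singleton.mp (hd N)
  have hu : ∀ N, (u : ℕ →ᵇ E) N = ∑ j ∈ Finset.range N, a j • e j := by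
    intro N
    induction N with
    | zero => simpa using h0
    | succ n ih =>
      rw [Finset.sum_range_succ, ← ih, hA n]
      abel
  have htend : Tendsto (fun N => ∑ j ∈ Finset.range N, a j • e j) atTop (𝓝 (0 : E)) := by
    have hspec := psLim_spec e u
    rw [show psLim e u = 0 from h] at hspec
    simpa only [hu] using hspec
  obtain ⟨b, -, hb0⟩ := hb 0
  have h1 := hb0 a htend
  have h2 : (fun _ : ℕ => (0:ℝ)) = b := by
    refine hb0 _ ?_
    simp only [zero_smul, Finset.sum_const_zero]
    exact tendsto_const_nhds
  have ha0 : ∀ j, a j = 0 := fun j => congrFun (h1.trans h2.symm) j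
  apply Subtype.ext
  ext N
  simp [hu N, ha0]

theorem psumsLim_bijective {e : ℕ → E} (hb : IsSchauderBasis e) :
    Function.Bijective (psumsLim e) := by
  constructor
  · -- injective
    intro u v huv
    have h0 : psumsLim e (u - v) = 0 := by rw [map_sub, huv, sub_self]
    have := psums_eq_zero hb (u - v) h0
    have := sub_eq_zero.mp this
    exact this
  · intro x
    obtain ⟨a, ha, -⟩ := hb x
    refine ⟨⟨psOf e a ha, psOf_mem e a ha⟩, ?_⟩
    refine tendsto_nhds_unique (psLim_spec e _) ?_
    simpa [psOf_coe] using ha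

theorem exists_schauder_coords {e : ℕ → E} (hb : IsSchauderBasis e) :
    ∃ φ : ℕ → E →L[ℝ] ℝ, ∀ x : E,
      Tendsto (fun N => ∑ k ∈ Finset.range N, φ k x • e k) atTop (𝓝 x) := by
  haveI : CompleteSpace (psums e) := (isClosed_psums e).completeSpace_coe
  have hker : LinearMap.ker (psumsLim e) = ⊥ :=
    LinearMap.ker_eq_bot.mpr (by exact (psumsLim_bijective hb).1)
  have hrange : LinearMap.range (psumsLim e) = ⊤ :=
    LinearMap.range_eq_top.mpr (by exact (psumsLim_bijective hb).2)
  set Φ := ContinuousLinearEquiv.ofBijective (psumsLim e) hker hrange with hΦ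
  have hΦa : ∀ u, Φ u = psumsLim e u := fun u => rfl
  choose g hg1 hg2 using fun k => exists_dual_vector ℝ (e k) (norm_ne_zero_iff.mpr (hb.ne_zero k))
  refine ⟨fun k => ((‖e k‖⁻¹ • g k).comp
      (((evalCLM ℝ (k+1) : (ℕ →ᵇ E) →L[ℝ] E) - evalCLM ℝ k).comp
        (psums e).subtypeL)).comp (Φ.symm : E →L[ℝ] psums e), fun x => ?_⟩
  set u : psums e := Φ.symm x with hu
  obtain ⟨h0, hd, -⟩ := u.2
  choose a hA using fun N => Submodule.mem_span_singleton.mp (hd N)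
  have hφ : ∀ k, (((‖e k‖⁻¹ • g k).comp
      (((evalCLM ℝ (k+1) : (ℕ →ᵇ E) →L[ℝ] E) - evalCLM ℝ k).comp
        (psums e).subtypeL)).comp (Φ.symm : E →L[ℝ] psums e)) x • e k
      = (u : ℕ →ᵇ E) (k+1) - (u : ℕ →ᵇ E) k := by
    intro k
    have hknz : ‖e k‖ ≠ (0:ℝ) := norm_ne_zero_iff.mpr (hb.ne_zero k)
    rw [← hA k]
    simp only [ContinuousLinearMap.comp_apply, ContinuousLinearEquiv.coe_coe,
      ContinuousLinearMap.sub_apply, evalCLM_apply, Submodule.subtypeL_apply, ← hu,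
      ContinuousLinearMap.smul_apply]
    rw [← hA k, map_smul, hg2 k]
    simp only [smul_eq_mul]
    congr 1
    field_simp
    exact mul_comm _ _
  have hsum : ∀ N, (∑ k ∈ Finset.range N,
      (((‖e k‖⁻¹ • g k).comp
      (((evalCLM ℝ (k+1) : (ℕ →ᵇ E) →L[ℝ] E) - evalCLM ℝ k).comp
        (psums e).subtypeL)).comp (Φ.symm : E →L[ℝ] psums e)) x • e k)
      = (u : ℕ →ᵇ E) N := by
    intro N
    rw [Finset.sum_congr rfl fun k _ => hφ k, Finset.sum_range_sub (fun N => (u : ℕ →ᵇ E) N), h0]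
    simp
  simp only [hsum]
  have := psLim_spec e u
  have hx : psLim e u = x := by
    have : Φ u = x := by rw [hu, ContinuousLinearEquiv.apply_symm_apply]
    rw [← this, hΦa u, psumsLim_apply]
  rwa [hx] at this

section coords

variable {e : ℕ → E} {φ : ℕ → E →L[ℝ] ℝ}
  (hb : IsSchauderBasis e)
  (hφ : ∀ x : E, Tendsto (fun N => ∑ k ∈ Finset.range N, φ k x • e k) atTop (𝓝 x))

include hb hφ

theorem coords_unique {b : ℕ → ℝ} {x : E}
    (hbx : Tendsto (fun N => ∑ k ∈ Finset.range N, b k • e k) atTop (𝓝 x)) :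
    ∀ k, b k = φ k x := by
  obtain ⟨a, -, ha⟩ := hb x
  have h1 := ha _ hbx
  have h2 := ha _ (hφ x)
  exact fun k => congrFun (h1.trans h2.symm) k

theorem coords_basis (j k : ℕ) : φ k (e j) = if k = j then 1 else 0 := by
  have : ∀ i, (if i = j then (1:ℝ) else 0) = φ i (e j) := by
    refine coords_unique hb hφ ?_
    have hev : ∀ᶠ N in atTop, (∑ k ∈ Finset.range N, (if k = j then (1:ℝ) else 0) • e k) = e j := by
      filter_upwards [eventually_ge_atTop (j+1)] with N hN
      rw [Finset.sum_eq_single j]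
      · simp
      · intro i _ hij; simp [hij]
      · intro h; exact absurd (Finset.mem_range.mpr (by omega)) h
    exact Tendsto.congr' (hev.mono fun N h => h.symm) tendsto_const_nhds
  exact (this k).symm

theorem coords_vanish {S : Set ℕ} {k : ℕ} (hk : k ∉ S) :
    ∀ x ∈ (Submodule.span ℝ (e '' S)).topologicalClosure, φ k x = 0 := by
  have hle : Submodule.span ℝ (e '' S) ≤ LinearMap.ker (φ k : E →ₗ[ℝ] ℝ) := by
    rw [Submodule.span_le]
    rintro - ⟨j, hj, rfl⟩
    have : k ≠ j := fun h => hk (h ▸ hj)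
    simp [LinearMap.mem_ker, coords_basis hb hφ j k, this]
  have hcl : (Submodule.span ℝ (e '' S)).topologicalClosure ≤ LinearMap.ker (φ k : E →ₗ[ℝ] ℝ) :=
    Submodule.topologicalClosure_minimal _ hle (ContinuousLinearMap.isClosed_ker (φ k))
  exact fun x hx => hcl hx

omit hb hφ in
theorem coords_det (hb : IsSchauderBasis e)
    (hφ : ∀ x : E, Tendsto (fun N => ∑ k ∈ Finset.range N, φ k x • e k) atTop (𝓝 x))
    (S : Finset ℕ) (v : E) (hv : v ∈ Submodule.span ℝ (e '' ↑S)) :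
    v = ∑ k ∈ S, φ k v • e k := by
  induction hv using Submodule.span_induction with
  | mem x hx =>
    obtain ⟨j, hj, rfl⟩ := hx
    rw [Finset.sum_eq_single j]
    · rw [coords_basis hb hφ j j]; simp
    · intro i _ hij; rw [coords_basis hb hφ j i]; simp [hij]
    · intro h; exact absurd hj h
  | zero => simp
  | add x y hx hy ihx ihy =>
    simp only [map_add, add_smul]
    rw [Finset.sum_add_distrib, ← ihx, ← ihy]
  | smul c x hx ih =>
    simp only [map_smul, smul_eq_mul, ← smul_smul]
    rw [← Finset.smul_sum, ← ih]

end coords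

section blocking

/-- The blocking sequence for a permuted basis. -/
noncomputable def blkm (π : Equiv.Perm ℕ) : ℕ → ℕ
  | 0 => 0
  | i + 1 => max (blkm π i + 1)
      (1 + Finset.sup (Finset.range (Finset.sup (Finset.range (blkm π i)) π + 1))
        (fun k => π.symm k))

/-- max of `π` over `[0, blkm π i)`. -/
noncomputable def csup (π : Equiv.Perm ℕ) (i : ℕ) : ℕ :=
  Finset.sup (Finset.range (blkm π i)) π

theorem blkm_zero (π : Equiv.Perm ℕ) : blkm π 0 = 0 := rfl

theorem blkm_strictMono (π : Equiv.Perm ℕ) : StrictMono (blkm π) :=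
  strictMono_nat_of_lt_succ fun i => lt_of_lt_of_le (Nat.lt_succ_self _) (le_max_left _ _)

theorem blkm_le_self (π : Equiv.Perm ℕ) (i : ℕ) : i ≤ blkm π i := by
  have h := blkm_strictMono π
  exact StrictMono.le_apply h

theorem csup_mono (π : Equiv.Perm ℕ) : Monotone (csup π) := by
  intro i i' h
  exact Finset.sup_mono (Finset.range_subset_range.mpr ((blkm_strictMono π).monotone h))

theorem pi_le_csup (π : Equiv.Perm ℕ) {j i : ℕ} (h : j < blkm π i) : π j ≤ csup π i :=
  Finset.le_sup (Finset.mem_range.mpr h)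

theorem csup_lt_pi (π : Equiv.Perm ℕ) {j i : ℕ} (h : blkm π (i + 1) ≤ j) :
    csup π i < π j := by
  by_contra hc
  push_neg at hc
  have h1 : π.symm (π j) ≤ Finset.sup (Finset.range (csup π i + 1)) (fun k => π.symm k) :=
    Finset.le_sup (Finset.mem_range.mpr (Nat.lt_succ_of_le hc))
  rw [Equiv.symm_apply_apply] at h1
  have h2 : blkm π (i + 1) ≥
      1 + Finset.sup (Finset.range (csup π i + 1)) (fun k => π.symm k) := le_max_right _ _
  omega

theorem blkm_le_csup (π : Equiv.Perm ℕ) (i : ℕ) : blkm π i ≤ csup π i + 1 := by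
  classical
  have hinj : Set.InjOn π (Finset.range (blkm π i)) := fun a _ b _ h => π.injective h
  have hcard : (Finset.image π (Finset.range (blkm π i))).card = blkm π i := by
    rw [Finset.card_image_of_injOn hinj, Finset.card_range]
  have hsub : Finset.image π (Finset.range (blkm π i)) ⊆ Finset.range (csup π i + 1) := by
    intro k hk
    obtain ⟨j, hj, rfl⟩ := Finset.mem_image.mp hk
    exact Finset.mem_range.mpr (Nat.lt_succ_of_le (pi_le_csup π (Finset.mem_range.mp hj)))
  have := Finset.card_le_card hsub
  rw [hcard, Finset.card_range] at this
  exact this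

theorem blkm_covers (π : Equiv.Perm ℕ) (j : ℕ) :
    ∃ i, blkm π i ≤ j ∧ j < blkm π (i + 1) := by
  classical
  have hne : ∃ i, j < blkm π i := ⟨j + 1, lt_of_lt_of_le (Nat.lt_succ_self j)
    (blkm_le_self π (j+1))⟩
  have hi0 : j < blkm π (Nat.find hne) := Nat.find_spec hne
  have hi0ne : Nat.find hne ≠ 0 := by
    intro h
    rw [h, blkm_zero] at hi0
    omega
  obtain ⟨i, hi⟩ := Nat.exists_eq_succ_of_ne_zero hi0ne
  refine ⟨i, ?_, by rw [← Nat.succ_eq_add_one, ← hi]; exact hi0⟩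
  have := Nat.find_min hne (m := i) (by omega)
  omega

end blocking

theorem span_biSup (f : ℕ → E) (s : Set ℕ) :
    (⨆ j ∈ s, Submodule.span ℝ {f j}) = Submodule.span ℝ (f '' s) := by
  rw [Set.image_eq_iUnion, Submodule.span_iUnion₂]

theorem span_biSup' (e : ℕ → E) (A : ℕ → Set ℕ) (s : Set ℕ) :
    (⨆ i ∈ s, Submodule.span ℝ (e '' A i)) = Submodule.span ℝ (e '' ⋃ i ∈ s, A i) := by
  rw [Set.image_iUnion₂, Submodule.span_iUnion₂]

theorem span_iSup' (e : ℕ → E) (A : ℕ → Set ℕ) :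
    (⨆ i, Submodule.span ℝ (e '' A i)) = Submodule.span ℝ (e '' ⋃ i, A i) := by
  rw [Set.image_iUnion, Submodule.span_iUnion]

theorem fdd_of_windows {e : ℕ → E} {φ : ℕ → E →L[ℝ] ℝ} (hb : IsSchauderBasis e)
    (hφ : ∀ x : E, Tendsto (fun N => ∑ k ∈ Finset.range N, φ k x • e k) atTop (𝓝 x))
    (A : ℕ → Set ℕ) (FA : ℕ → Finset ℕ) (hFA : ∀ t, ↑(FA t) = A t)
    (β : ℕ → ℕ) (hβ : Tendsto β atTop atTop)
    (hlt : ∀ {t K k}, k ∈ A t → t < K → k < β K)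
    (hge : ∀ {t K k}, k ∈ A t → K ≤ t → β K ≤ k) :
    IsFDDof (fun t => Submodule.span ℝ (e '' A t)) := by
  classical
  have hdisj : ∀ {t t' k}, k ∈ A t → k ∈ A t' → t = t' := by
    intro t t' k h h'
    by_contra hne
    rcases Nat.lt_or_ge t t' with h2 | h2
    · exact absurd (hlt h h2) (not_lt.mpr (hge h' le_rfl))
    · have h2' : t' < t := by omega
      exact absurd (hlt h' h2') (not_lt.mpr (hge h le_rfl))
  intro x hx
  rw [span_iSup'] at hx
  set w : ℕ → E := fun t => ∑ k ∈ FA t, φ k x • e k with hw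
  have hwmem : ∀ t, w t ∈ Submodule.span ℝ (e '' A t) := by
    intro t
    refine sum_mem fun k hk => Submodule.smul_mem _ _ (Submodule.subset_span ?_)
    exact ⟨k, by rw [← hFA t]; exact hk, rfl⟩
  -- characterization of any admissible sequence
  have hchar : ∀ v : ℕ → E, (∀ t, v t ∈ Submodule.span ℝ (e '' A t)) →
      Tendsto (fun K => ∑ t ∈ Finset.range K, v t) atTop (𝓝 x) → ∀ t, v t = w t := by
    intro v hvm hvt t
    have hdet : v t = ∑ k ∈ FA t, φ k (v t) • e k := by
      refine coords_det hb hφ (FA t) (v t) ?_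
      rw [hFA t]; exact hvm t
    have hco : ∀ k ∈ FA t, φ k (v t) = φ k x := by
      intro k hk
      have hkA : k ∈ A t := by rw [← hFA t]; exact hk
      have hvan : ∀ s, s ≠ t → φ k (v s) = 0 := by
        intro s hs
        refine coords_vanish hb hφ (S := A s) (fun hkAs => hs (hdisj hkAs hkA)) (v s) ?_
        exact Submodule.le_topologicalClosure _ (hvm s)
      have hev : ∀ᶠ K in atTop, φ k (∑ s ∈ Finset.range K, v s) = φ k (v t) := by
        filter_upwards [eventually_ge_atTop (t + 1)] with K hK
        rw [map_sum]
        refine Finset.sum_eq_single_of_mem t (Finset.mem_range.mpr (by omega)) ?_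
        intro s _ hst
        exact hvan s hst
      have h1 : Tendsto (fun K => φ k (∑ s ∈ Finset.range K, v s)) atTop (𝓝 (φ k x)) :=
        ((φ k).continuous.tendsto x).comp hvt
      have h2 : Tendsto (fun K => φ k (∑ s ∈ Finset.range K, v s)) atTop (𝓝 (φ k (v t))) :=
        Tendsto.congr' (hev.mono fun K h => h.symm) tendsto_const_nhds
      exact tendsto_nhds_unique h2 h1
    rw [hdet]
    exact Finset.sum_congr rfl fun k hk => by rw [hco k hk]
  -- partial sums of w
  have hFdisj : ∀ t t', t ≠ t' → Disjoint (FA t) (FA t') := by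
    intro t t' hne
    rw [Finset.disjoint_left]
    intro k hk hk'
    exact hne (hdisj (by rw [← hFA t]; exact hk) (by rw [← hFA t']; exact hk'))
  have hps : ∀ K, ∑ t ∈ Finset.range K, w t = ∑ k ∈ Finset.range (β K), φ k x • e k := by
    intro K
    rw [← Finset.sum_biUnion (fun t _ t' _ h => hFdisj t t' h)]
    refine Finset.sum_subset ?_ ?_
    · intro k hk
      obtain ⟨t, ht, hkt⟩ := Finset.mem_biUnion.mp hk
      exact Finset.mem_range.mpr (hlt (by rw [← hFA t]; exact hkt) (Finset.mem_range.mp ht))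
    · intro k hk hk'
      have hkA : k ∉ ⋃ t, A t := by
        intro hmem
        obtain ⟨t, ht⟩ := Set.mem_iUnion.mp hmem
        rcases Nat.lt_or_ge t K with h2 | h2
        · exact hk' (Finset.mem_biUnion.mpr ⟨t, Finset.mem_range.mpr h2,
            by rw [← hFA t] at ht; exact ht⟩)
        · have := hge ht h2
          have := Finset.mem_range.mp hk
          omega
      rw [coords_vanish hb hφ hkA x hx, zero_smul]
  have htend : Tendsto (fun K => ∑ t ∈ Finset.range K, w t) atTop (𝓝 x) := by
    simp only [hps]
    exact (hφ x).comp hβ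
  exact ⟨w, ⟨hwmem, htend⟩, fun v ⟨hvm, hvt⟩ => funext fun t => hchar v hvm hvt t⟩


end SchauderAux

set_option maxHeartbeats 1000000 in
/-- For any Schauder basis `(e n)` of `X` and any permutation `π`,
the permuted sequence can be blocked to an SBD of `X`. -/
theorem stmt6 [CompleteSpace E] (e : ℕ → E) (hbasis : IsSchauderBasis e)
    (π : Equiv.Perm ℕ) :
    ∃ m : ℕ → ℕ, m 0 = 0 ∧ StrictMono m ∧
      IsSBD (fun i => ⨆ j ∈ Set.Ico (m i) (m (i + 1)),
        Submodule.span ℝ {e (π j)}) := by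
  classical
  obtain ⟨φ, hφ⟩ := exists_schauder_coords hbasis
  refine ⟨blkm π, blkm_zero π, blkm_strictMono π, ?_⟩
  set A : ℕ → Set ℕ := fun i => π '' Set.Ico (blkm π i) (blkm π (i + 1)) with hA
  set FAi : ℕ → Finset ℕ := fun i => (Finset.Ico (blkm π i) (blkm π (i+1))).image π with hFAi
  have hFAicoe : ∀ i, ↑(FAi i) = A i := by
    intro i
    rw [hFAi, hA]
    push_cast [Finset.coe_image, Finset.coe_Ico]
    rfl
  have hX : ∀ i, (⨆ j ∈ Set.Ico (blkm π i) (blkm π (i + 1)),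
      Submodule.span ℝ {e (π j)}) = Submodule.span ℝ (e '' A i) := by
    intro i
    rw [span_biSup (fun j => e (π j)) _, hA]
    congr 1
    rw [← Set.image_comp]
    rfl
  -- basic facts about A
  have hA_le : ∀ {i k}, k ∈ A i → k ≤ csup π (i + 1) := by
    rintro i k ⟨j, hj, rfl⟩
    exact pi_le_csup π hj.2
  have hA_ge : ∀ {i k}, k ∈ A (i + 1) → csup π i < k := by
    rintro i k ⟨j, hj, rfl⟩
    exact csup_lt_pi π hj.1
  have hAdisj : ∀ {i i' k}, k ∈ A i → k ∈ A i' → i = i' := by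
    rintro i i' k ⟨j, hj, hjk⟩ ⟨j', hj', hjk'⟩
    have hjj : j = j' := π.injective (hjk.trans hjk'.symm)
    subst hjj
    obtain ⟨ha1, ha2⟩ := hj
    obtain ⟨hb1, hb2⟩ := hj'
    by_contra hne
    rcases Nat.lt_or_ge i i' with h2 | h2
    · have := (blkm_strictMono π).monotone (show i + 1 ≤ i' by omega)
      omega
    · have h2' : i' < i := by omega
      have := (blkm_strictMono π).monotone (show i' + 1 ≤ i by omega)
      omega
  have hAcover : (⋃ i, A i) = Set.univ := by
    rw [Set.eq_univ_iff_forall]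
    intro k
    obtain ⟨i, hi1, hi2⟩ := blkm_covers π (π.symm k)
    exact Set.mem_iUnion.mpr ⟨i, ⟨π.symm k, ⟨hi1, hi2⟩, π.apply_symm_apply k⟩⟩
  constructor
  · -- IsDDD
    refine ⟨fun i => ?_, ?_, fun n0 => ?_⟩
    · haveI h1 : FiniteDimensional ℝ (Submodule.span ℝ (e '' A i)) :=
        FiniteDimensional.span_of_finite ℝ
          (((Set.finite_Ico (blkm π i) (blkm π (i + 1))).image ⇑π).image e)
      exact Module.Finite.equiv (LinearEquiv.ofEq _ _ (hX i).symm)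
    · have h1 : (⨆ i, ⨆ j ∈ Set.Ico (blkm π i) (blkm π (i + 1)),
          Submodule.span ℝ {e (π j)}) = Submodule.span ℝ (Set.range e) := by
        simp only [hX]
        rw [span_iSup', hAcover, Set.image_univ]
      rw [h1, eq_top_iff]
      intro x _
      have : x ∈ _root_.closure (Submodule.span ℝ (Set.range e) : Set E) :=
        mem_closure_of_tendsto (hφ x) (Eventually.of_forall fun N =>
          sum_mem fun k _ => Submodule.smul_mem _ _ (Submodule.subset_span (Set.mem_range_self k)))
      exact this
    · rw [eq_bot_iff]
      intro x hx
      rw [Submodule.mem_inf] at hx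
      obtain ⟨hx1, hx2⟩ := hx
      simp only [hX] at hx1 hx2
      rw [span_biSup' e A] at hx2
      have hvan : ∀ k ∈ FAi n0, φ k x = 0 := by
        intro k hk
        have hkA : k ∈ A n0 := by rw [← hFAicoe n0]; exact hk
        refine coords_vanish hbasis hφ ?_ x hx2
        intro hmem
        obtain ⟨mm, hmm⟩ := Set.mem_iUnion.mp hmem
        obtain ⟨hmmne, hmmA⟩ := Set.mem_iUnion.mp hmm
        exact hmmne (hAdisj hmmA hkA)
      have hdet : x = ∑ k ∈ FAi n0, φ k x • e k := by
        refine coords_det hbasis hφ (FAi n0) x ?_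
        rw [hFAicoe n0]; exact hx1
      rw [hdet]
      refine Submodule.sum_mem _ fun k hk => ?_
      rw [hvan k hk, zero_smul]
      exact Submodule.zero_mem _
  · -- skipped FDD condition
    intro n m' hnm hskip
    have hnmono : StrictMono n := strictMono_nat_of_lt_succ fun t => by
      have := hnm t; have := hskip t; omega
    have hm'mono : Monotone m' := monotone_nat_of_le_succ fun t => by
      have := hnm (t+1); have := hskip t; omega
    simp only [hX]
    rw [show (fun i => ⨆ j ∈ Set.Icc (n i) (m' i), Submodule.span ℝ (e '' A j)) =
        fun t => Submodule.span ℝ (e '' ⋃ i ∈ Set.Icc (n t) (m' t), A i) from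
      funext fun t => span_biSup' e A _]
    set β : ℕ → ℕ := fun K => Nat.casesOn K 0 (fun K' => csup π (m' K' + 1) + 1) with hβdef
    have hβK : ∀ K, K ≤ β K := by
      intro K
      cases K with
      | zero => exact Nat.zero_le _
      | succ K' =>
        have h1 := blkm_le_csup π (m' K' + 1)
        have h2 := blkm_le_self π (m' K' + 1)
        have h3 : K' ≤ m' K' := le_trans (hnmono.le_apply) (hnm K')
        simp only [hβdef]
        omega
    refine fdd_of_windows hbasis hφ _ (fun t => (Finset.Icc (n t) (m' t)).biUnion FAi) ?_
      β (tendsto_atTop_mono hβK tendsto_id) ?_ ?_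
    · intro t
      push_cast [Finset.coe_biUnion, Finset.coe_Icc]
      simp only [hFAicoe]
    · intro t K k hk ht
      obtain ⟨i, hi⟩ := Set.mem_iUnion.mp hk
      obtain ⟨hiIcc, hiA⟩ := Set.mem_iUnion.mp hi
      obtain ⟨K', rfl⟩ : ∃ K', K = K' + 1 := ⟨K - 1, by omega⟩
      have h1 : k ≤ csup π (i + 1) := hA_le hiA
      have h2 : i + 1 ≤ m' K' + 1 := by
        have : m' t ≤ m' K' := hm'mono (by omega)
        have := hiIcc.2
        omega
      have h3 := csup_mono π h2
      simp only [hβdef]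
      omega
    · intro t K k hk hKt
      cases K with
      | zero => exact Nat.zero_le _
      | succ K' =>
        obtain ⟨i, hi⟩ := Set.mem_iUnion.mp hk
        obtain ⟨hiIcc, hiA⟩ := Set.mem_iUnion.mp hi
        have h1 : m' K' + 1 < n t := by
          have := hskip K'
          have : n (K' + 1) ≤ n t := hnmono.monotone hKt
          omega
        have h2 : m' K' + 2 ≤ i := by
          have := hiIcc.1
          omega
        obtain ⟨i', rfl⟩ : ∃ i', i = i' + 1 := ⟨i - 1, by omega⟩
        have h3 : csup π i' < k := hA_ge hiA
        have h4 : csup π (m' K' + 1) ≤ csup π i' := csup_mono π (by omega)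
        simp only [hβdef]
        omega
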